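/- The function Δ(p‖q) = (p - q) * log p on (0,1)² is not a (separable, one-dimensional) Bregman divergence: there do not exist functions φ, φ' : ℝ → ℝ such that φ has derivative φ'(x) at every x ∈ (0,1) and (p - q) * log p = φ p - φ q - (p - q) * φ' q for all p, q ∈ (0,1). -/

import Mathlib

open Real

theorem delta_not_bregman :
    ¬ ∃ φ φ' : ℝ → ℝ,
      (∀ x ∈ Set.Ioo (0 : ℝ) 1, HasDerivAt φ (φ' x) x) ∧
      (∀ p ∈ Set.Ioo (0 : ℝ) 1, ∀ q ∈ Set.Ioo (0 : ℝ) 1,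
        (p - q) * Real.log p = φ p - φ q - (p - q) * φ' q) := by
  rintro ⟨φ, φ', hderiv, heq⟩
  set q : ℝ := 1/2 with hq
  have hqmem : q ∈ Set.Ioo (0 : ℝ) 1 := by norm_num [hq]
  -- ψ agrees with φ on Ioo 0 1
  have hψ : HasDerivAt (fun p => (p - q) * Real.log p + φ q + (p - q) * φ' q)
      (Real.log q + φ' q) q := by
    have h1 : HasDerivAt (fun p : ℝ => (p - q) * Real.log p) (Real.log q) q := by
      have := ((hasDerivAt_id q).sub_const q).mul (Real.hasDerivAt_log (by norm_num [hq]))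
      simpa [Pi.mul_def] using this
    have h2 : HasDerivAt (fun p : ℝ => (p - q) * φ' q) (φ' q) q := by
      have := ((hasDerivAt_id q).sub_const q).mul_const (φ' q)
      simpa using this
    simpa [Pi.add_def] using (h1.add_const (φ q)).add h2
  have hφq : HasDerivAt φ (Real.log q + φ' q) q := by
    apply hψ.congr_of_eventuallyEq
    filter_upwards [isOpen_Ioo.mem_nhds hqmem] with p hp
    have := heq p hp q hqmem
    linarith
  have := (hderiv q hqmem).unique hφq
  have hlog : Real.log q = 0 := by linarith
  have : Real.log q < 0 := Real.log_neg (by norm_num [hq]) (by norm_num [hq])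
  linarith
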